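/- Independence (A2) for aggregative semantics: let A = (𝒜, ℛ, 𝒮, w) and A' = (𝒜', ℛ', 𝒮', w') be acyclic QBAFs on disjoint argument sets, and let A ⊕ A' be the QBAF on the disjoint union 𝒜 ⊔ 𝒜' whose attack relation is ℛ ∪ ℛ', whose support relation is 𝒮 ∪ 𝒮', and whose weight function restricts to w on 𝒜 and to w' on 𝒜'. If Deg satisfies the aggregative recurrence for (φ_R, φ_S, φ_f) on A and Deg'' satisfies the aggregative recurrence for the same (φ_R, φ_S, φ_f) on A ⊕ A', then Deg(a) = Deg''(a) for every a ∈ 𝒜. -/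

import Mathlib

open scoped Classical

/-- The finset of parents of `a` for a relation `Rel` (`b` is a parent of `a`
when `Rel b a` holds, i.e. `(b, a)` is in the relation). -/
noncomputable def parentSet {α : Type*} [Fintype α] (Rel : α → α → Prop) (a : α) :
    Finset α :=
  Finset.univ.filter (fun b => Rel b a)

/-- The multiset of `Deg`-values of the parents of `a`. -/
noncomputable def parentVals {α : Type*} [Fintype α] (Rel : α → α → Prop)
    (Deg : α → ℝ) (a : α) : Multiset ℝ :=
  (parentSet Rel a).val.map Deg

/-- `Deg` satisfies the aggregative recurrence for `(φR, φS, φf)` on the QBAF with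
attack relation `R`, support relation `S` and weight function `w`. -/
def AggRec {α : Type*} [Fintype α] (R S : α → α → Prop) (w : α → ℝ)
    (φR φS : Multiset ℝ → ℝ) (φf : ℝ → ℝ → ℝ → ℝ) (Deg : α → ℝ) : Prop :=
  ∀ a : α, Deg a = φf (φR (parentVals R Deg a)) (φS (parentVals S Deg a)) (w a)

/-- The attack/support relation on the disjoint union of two QBAFs. -/
def sumRel {α β : Type*} (R : α → α → Prop) (R' : β → β → Prop) :
    α ⊕ β → α ⊕ β → Prop
  | Sum.inl b, Sum.inl a => R b a
  | Sum.inr b, Sum.inr a => R' b a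
  | _, _ => False

/-- Independence (A2) for aggregative semantics. -/
theorem statement2 {α α' : Type*} [Fintype α] [Fintype α']
    (R S : α → α → Prop) (w : α → ℝ)
    (R' S' : α' → α' → Prop) (w' : α' → ℝ)
    (hRS : ∀ a b : α, ¬ (R a b ∧ S a b))
    (hRS' : ∀ a b : α', ¬ (R' a b ∧ S' a b))
    (hw : ∀ a : α, w a ∈ Set.Icc (0 : ℝ) 1)
    (hw' : ∀ a : α', w' a ∈ Set.Icc (0 : ℝ) 1)
    (hacyclic : WellFounded (fun b a : α => R b a ∨ S b a))
    (hacyclic' : WellFounded (fun b a : α' => R' b a ∨ S' b a))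
    (φR φS : Multiset ℝ → ℝ) (φf : ℝ → ℝ → ℝ → ℝ)
    (Deg : α → ℝ) (Deg'' : α ⊕ α' → ℝ)
    (hDeg : AggRec R S w φR φS φf Deg)
    (hDeg'' : AggRec (sumRel R R') (sumRel S S') (Sum.elim w w') φR φS φf Deg'') :
    ∀ a : α, Deg a = Deg'' (Sum.inl a) := by
  have hset : ∀ (T : α → α → Prop) (T' : α' → α' → Prop) (a : α),
      parentSet (sumRel T T') (Sum.inl a) =
        (parentSet T a).map ⟨Sum.inl, Sum.inl_injective⟩ := by
    intro T T' a
    ext b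
    cases b with
    | inl b =>
        simp only [parentSet, Finset.mem_filter, Finset.mem_univ, true_and]
        simp [sumRel]
    | inr b =>
        simp only [parentSet, Finset.mem_filter, Finset.mem_univ, true_and]
        simp [sumRel]
  intro a
  induction a using WellFounded.induction hacyclic with
  | _ a ih =>
    have hvals : ∀ (T : α → α → Prop) (T' : α' → α' → Prop)
        (hT : ∀ b, T b a → (T b a ∨ S b a) ∨ (R b a ∨ T b a)),
        True := fun _ _ _ => trivial
    have key : ∀ (T : α → α → Prop) (T' : α' → α' → Prop)
        (hT : ∀ b, T b a → R b a ∨ S b a),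
        parentVals (sumRel T T') Deg'' (Sum.inl a) = parentVals T Deg a := by
      intro T T' hT
      unfold parentVals
      rw [hset T T' a]
      rw [Finset.map_val, Multiset.map_map]
      apply Multiset.map_congr rfl
      intro b hb
      have hb' : T b a := by
        simpa [parentSet] using hb
      exact (ih b (hT b hb')).symm
    rw [hDeg a, hDeg'' (Sum.inl a)]
    rw [key R R' (fun b h => Or.inl h), key S S' (fun b h => Or.inr h)]
    rfl
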